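/- The number of isomorphism classes of 2-dimensional algebras (not necessarily associative or unital) over the field F_2 is exactly 52. -/
import Mathlib


open Matrix Kronecker

variable {K : Type*} [Field K] {n : ℕ}

/-- The multiplication of the algebra `alg(M)` on `K^n`:
`e_i * e_j = ∑ k, (M i) j k • e_k`. -/
def algMul (M : Fin n → Matrix (Fin n) (Fin n) K) (x y : Fin n → K) : Fin n → K :=
  fun k => ∑ i, ∑ j, x i * y j * M i j k

/-- The right action `φ` of `GL n K` on tuples of matrices:
`φ(M, G)_l = G⁻¹ (∑ i, G_{il} M_i) G`. -/
def phi (M : Fin n → Matrix (Fin n) (Fin n) K) (G : GL (Fin n) K) :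
    Fin n → Matrix (Fin n) (Fin n) K :=
  fun l => (↑G⁻¹ : Matrix (Fin n) (Fin n) K) *
    (∑ i, (G : Matrix (Fin n) (Fin n) K) i l • M i) * (G : Matrix (Fin n) (Fin n) K)

/-- `algMul M` as a bilinear map. -/
def algMulL (M : Fin n → Matrix (Fin n) (Fin n) K) :
    (Fin n → K) →ₗ[K] (Fin n → K) →ₗ[K] (Fin n → K) :=
  LinearMap.mk₂ K (algMul M)
    (fun x x' y => by ext k; simp [algMul, add_mul, Finset.sum_add_distrib])
    (fun c x y => by
      ext k; simp only [algMul, Pi.smul_apply, smul_eq_mul, Finset.mul_sum]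
      exact Finset.sum_congr rfl fun i _ => Finset.sum_congr rfl fun j _ => by ring)
    (fun x y y' => by ext k; simp [algMul, mul_add, add_mul, Finset.sum_add_distrib])
    (fun c x y => by
      ext k; simp only [algMul, Pi.smul_apply, smul_eq_mul, Finset.mul_sum]
      exact Finset.sum_congr rfl fun i _ => Finset.sum_congr rfl fun j _ => by ring)

/-- Isomorphism of `n`-dimensional `K`-algebras, given as bilinear multiplications on `K^n`. -/
def isoRelL (B B' : (Fin n → K) →ₗ[K] (Fin n → K) →ₗ[K] (Fin n → K)) : Prop :=
  ∃ f : (Fin n → K) ≃ₗ[K] (Fin n → K), ∀ x y, f (B x y) = B' (f x) (f y)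

/-! ### Auxiliary setup -/

abbrev V2 := Fin 2 → ZMod 2
abbrev BL2 := V2 →ₗ[ZMod 2] V2 →ₗ[ZMod 2] V2
abbrev C2 := Fin 2 → Fin 2 → Fin 2 → ZMod 2
abbrev M2 := Fin 2 → Fin 2 → ZMod 2

/-- `0/1`-valued embedding of `Bool` into `ZMod 2`. -/
def zb (b : Bool) : ZMod 2 := if b then 1 else 0

@[simp] lemma zb_mul (p q : Bool) : zb p * zb q = zb (p && q) := by cases p <;> cases q <;> decide
@[simp] lemma zb_add (p q : Bool) : zb p + zb q = zb (xor p q) := by cases p <;> cases q <;> decide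
@[simp] lemma zb_inj {p q : Bool} : zb p = zb q ↔ p = q := by cases p <;> cases q <;> decide

/-- a 2×2 matrix over `F₂` from four booleans -/
def mA (a b c d : Bool) : M2 := ![![zb a, zb b], ![zb c, zb d]]

@[simp] lemma mA00 (a b c d : Bool) : mA a b c d 0 0 = zb a := rfl
@[simp] lemma mA01 (a b c d : Bool) : mA a b c d 0 1 = zb b := rfl
@[simp] lemma mA10 (a b c d : Bool) : mA a b c d 1 0 = zb c := rfl
@[simp] lemma mA11 (a b c d : Bool) : mA a b c d 1 1 = zb d := rfl

/-- the six invertible 2×2 matrices over `F₂` -/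
def glList : List M2 :=
  [mA true false false true, mA false true true false, mA true true false true,
   mA true false true true, mA false true true true, mA true true true false]

/-- structure-constant form of the isomorphism condition w.r.t. a matrix `A` -/
def condA (A : M2) (c c' : C2) : Prop :=
  ∀ i j k, A k 0 * c i j 0 + A k 1 * c i j 1 =
    A 0 i * A 0 j * c' 0 0 k + A 0 i * A 1 j * c' 0 1 k +
    A 1 i * A 0 j * c' 1 0 k + A 1 i * A 1 j * c' 1 1 k

instance (A : M2) (c c' : C2) : Decidable (condA A c c') := by unfold condA; infer_instance

/-- isomorphism relation on structure constants -/
def Rc (c c' : C2) : Prop := ∃ A ∈ glList, condA A c c'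

instance : DecidableRel Rc := fun c c' => by unfold Rc; infer_instance

/-! ### Bit-level (fast) model -/

def condB (a b c d : Bool) (m n : Nat) : Bool :=
  ((xor (a && Nat.testBit m 0) (b && Nat.testBit m 1)) == (xor (xor (xor ((a && a) && Nat.testBit n 0) ((a && c) && Nat.testBit n 2)) ((c && a) && Nat.testBit n 4)) ((c && c) && Nat.testBit n 6))) &&
  ((xor (c && Nat.testBit m 0) (d && Nat.testBit m 1)) == (xor (xor (xor ((a && a) && Nat.testBit n 1) ((a && c) && Nat.testBit n 3)) ((c && a) && Nat.testBit n 5)) ((c && c) && Nat.testBit n 7))) &&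
  ((xor (a && Nat.testBit m 2) (b && Nat.testBit m 3)) == (xor (xor (xor ((a && b) && Nat.testBit n 0) ((a && d) && Nat.testBit n 2)) ((c && b) && Nat.testBit n 4)) ((c && d) && Nat.testBit n 6))) &&
  ((xor (c && Nat.testBit m 2) (d && Nat.testBit m 3)) == (xor (xor (xor ((a && b) && Nat.testBit n 1) ((a && d) && Nat.testBit n 3)) ((c && b) && Nat.testBit n 5)) ((c && d) && Nat.testBit n 7))) &&
  ((xor (a && Nat.testBit m 4) (b && Nat.testBit m 5)) == (xor (xor (xor ((b && a) && Nat.testBit n 0) ((b && c) && Nat.testBit n 2)) ((d && a) && Nat.testBit n 4)) ((d && c) && Nat.testBit n 6))) &&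
  ((xor (c && Nat.testBit m 4) (d && Nat.testBit m 5)) == (xor (xor (xor ((b && a) && Nat.testBit n 1) ((b && c) && Nat.testBit n 3)) ((d && a) && Nat.testBit n 5)) ((d && c) && Nat.testBit n 7))) &&
  ((xor (a && Nat.testBit m 6) (b && Nat.testBit m 7)) == (xor (xor (xor ((b && b) && Nat.testBit n 0) ((b && d) && Nat.testBit n 2)) ((d && b) && Nat.testBit n 4)) ((d && d) && Nat.testBit n 6))) &&
  ((xor (c && Nat.testBit m 6) (d && Nat.testBit m 7)) == (xor (xor (xor ((b && b) && Nat.testBit n 1) ((b && d) && Nat.testBit n 3)) ((d && b) && Nat.testBit n 5)) ((d && d) && Nat.testBit n 7)))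

def RfB (m n : Nat) : Bool :=
  condB true false false true m n || condB false true true false m n ||
  condB true true false true m n || condB true false true true m n ||
  condB false true true true m n || condB true true true false m n

def Rf (m n : Fin 256) : Prop := RfB m.1 n.1 = true

instance : DecidableRel Rf := fun _ _ => inferInstanceAs (Decidable (_ = true))

/-- decode structure constants from a number -/
def dC (m : Fin 256) : C2 := fun i j k => zb (Nat.testBit m.1 (4*i.1+2*j.1+k.1))

/-- encode structure constants as a number -/
def eC (c : C2) : Fin 256 :=
  ⟨(c 0 0 0).val + 2*(c 0 0 1).val + 4*(c 0 1 0).val + 8*(c 0 1 1).val +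
    16*(c 1 0 0).val + 32*(c 1 0 1).val + 64*(c 1 1 0).val + 128*(c 1 1 1).val, by
    have h : ∀ z : ZMod 2, z.val < 2 := fun z => z.val_lt
    have := h (c 0 0 0); have := h (c 0 0 1); have := h (c 0 1 0); have := h (c 0 1 1)
    have := h (c 1 0 0); have := h (c 1 0 1); have := h (c 1 1 0); have := h (c 1 1 1)
    omega⟩

set_option maxRecDepth 10000 in
lemma dC_eC : ∀ c : C2, dC (eC c) = c := by decide

set_option maxRecDepth 100000 in
lemma eC_dC : ∀ m : Fin 256, eC (dC m) = m := by decide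

def E2 : C2 ≃ Fin 256 := ⟨eC, dC, dC_eC, eC_dC⟩

lemma condA_iff (a b c d : Bool) (m n : Fin 256) :
    condA (mA a b c d) (dC m) (dC n) ↔ condB a b c d m.1 n.1 = true := by
  simp only [condA, condB, Fin.forall_fin_two, mA00, mA01, mA10, mA11, dC,
    Bool.and_eq_true, beq_iff_eq, zb_mul, zb_add, zb_inj]
  norm_num
  tauto

lemma Rc_iff (m n : Fin 256) : Rc (dC m) (dC n) ↔ Rf m n := by
  simp only [Rc, glList, List.mem_cons, List.not_mem_nil, or_false, exists_eq_or_imp,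
    exists_eq_left, condA_iff, Rf, RfB, Bool.or_eq_true]
  tauto

/-! ### From bilinear maps to structure constants -/

def es (i : Fin 2) : V2 := fun j => if i = j then 1 else 0

lemma key (x : V2) : x = x 0 • es 0 + x 1 • es 1 := by
  have := pi_eq_sum_univ x
  rwa [Fin.sum_univ_two] at this

def toC (B : BL2) : C2 := fun i j k => B (es i) (es j) k

def fromC (c : C2) : BL2 := algMulL (fun i => Matrix.of (c i))

lemma toC_fromC (c : C2) : toC (fromC c) = c := by
  funext i j k
  simp only [toC, fromC, algMulL, LinearMap.mk₂_apply, algMul, Fin.sum_univ_two]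
  fin_cases i <;> fin_cases j <;> simp [es, Matrix.of_apply]

lemma fromC_toC (B : BL2) : fromC (toC B) = B := by
  apply LinearMap.ext; intro x; apply LinearMap.ext; intro y
  funext k
  simp only [fromC, algMulL, LinearMap.mk₂_apply, algMul, Fin.sum_univ_two, toC, Matrix.of_apply]
  conv_rhs => rw [key x, key y]
  simp only [map_add, _root_.map_smul, LinearMap.add_apply, LinearMap.smul_apply,
    Pi.add_apply, Pi.smul_apply, smul_eq_mul]
  ring

def E1 : BL2 ≃ C2 := ⟨toC, fromC, fromC_toC, toC_fromC⟩

/-- two-sided matrix inverse criterion membership in glList -/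
lemma mem_glList (A A' : M2)
    (h : ∀ k m, A k 0 * A' 0 m + A k 1 * A' 1 m = es m k) : A ∈ glList := by
  revert h; revert A A'; decide

lemma glList_inv (A : M2) (hA : A ∈ glList) :
    ∃ A' ∈ glList, (∀ k m, A k 0 * A' 0 m + A k 1 * A' 1 m = es m k) ∧
      (∀ k m, A' k 0 * A 0 m + A' k 1 * A 1 m = es m k) := by
  revert hA; revert A; decide

def mkEquiv (A A' : M2)
    (hinv1 : ∀ k m, A k 0 * A' 0 m + A k 1 * A' 1 m = es m k)
    (hinv2 : ∀ k m, A' k 0 * A 0 m + A' k 1 * A 1 m = es m k) :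
    V2 ≃ₗ[ZMod 2] V2 where
  toFun x := fun k => A k 0 * x 0 + A k 1 * x 1
  invFun x := fun k => A' k 0 * x 0 + A' k 1 * x 1
  map_add' x y := by funext k; simp only [Pi.add_apply]; ring
  map_smul' c x := by
    funext k; simp only [Pi.smul_apply, smul_eq_mul, RingHom.id_apply]; ring
  left_inv x := by
    funext k
    show A' k 0 * (A 0 0 * x 0 + A 0 1 * x 1) + A' k 1 * (A 1 0 * x 0 + A 1 1 * x 1) = x k
    have h0 := hinv2 k 0
    have h1 := hinv2 k 1
    have hx : x k = es 0 k * x 0 + es 1 k * x 1 := by fin_cases k <;> simp [es]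
    rw [hx]
    linear_combination x 0 * h0 + x 1 * h1
  right_inv x := by
    funext k
    show A k 0 * (A' 0 0 * x 0 + A' 0 1 * x 1) + A k 1 * (A' 1 0 * x 0 + A' 1 1 * x 1) = x k
    have h0 := hinv1 k 0
    have h1 := hinv1 k 1
    have hx : x k = es 0 k * x 0 + es 1 k * x 1 := by fin_cases k <;> simp [es]
    rw [hx]
    linear_combination x 0 * h0 + x 1 * h1

lemma mkEquiv_apply (A A' : M2) (h1) (h2) (x : V2) (p : Fin 2) :
    mkEquiv A A' h1 h2 x p = A p 0 * x 0 + A p 1 * x 1 := rfl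

lemma expand (B : BL2) (u v : V2) (k : Fin 2) :
    B u v k = u 0 * v 0 * toC B 0 0 k + u 0 * v 1 * toC B 0 1 k +
      u 1 * v 0 * toC B 1 0 k + u 1 * v 1 * toC B 1 1 k := by
  conv_lhs => rw [key u, key v]
  simp only [map_add, _root_.map_smul, LinearMap.add_apply, LinearMap.smul_apply,
    Pi.add_apply, Pi.smul_apply, smul_eq_mul, toC]
  ring

lemma isoRelL_iff_Rc (B B' : BL2) : isoRelL B B' ↔ Rc (toC B) (toC B') := by
  constructor
  · rintro ⟨f, hf⟩
    set A : M2 := fun k i => f (es i) k with hA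
    set A' : M2 := fun k i => f.symm (es i) k with hA'
    have hfx : ∀ x : V2, ∀ k, f x k = A k 0 * x 0 + A k 1 * x 1 := by
      intro x k
      conv_lhs => rw [key x]
      simp only [map_add, _root_.map_smul, Pi.add_apply, Pi.smul_apply, smul_eq_mul, hA]
      ring
    have hmem : A ∈ glList := by
      apply mem_glList A A'
      intro k m
      have h1 : f (f.symm (es m)) = es m := f.apply_symm_apply _
      have h2 := congrFun h1 k
      rw [hfx (f.symm (es m)) k] at h2
      exact h2
    refine ⟨A, hmem, ?_⟩
    intro i j k
    have h0 := congrFun (hf (es i) (es j)) k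
    rw [hfx (B (es i) (es j)) k, expand B' (f (es i)) (f (es j)) k] at h0
    exact h0
  · rintro ⟨A, hA, hcond⟩
    obtain ⟨A', _, hinv1, hinv2⟩ := glList_inv A hA
    refine ⟨mkEquiv A A' hinv1 hinv2, ?_⟩
    intro x y; funext k
    show A k 0 * (B x y) 0 + A k 1 * (B x y) 1 = _
    rw [expand B x y 0, expand B x y 1, expand B']
    simp only [mkEquiv_apply]
    have c00 := hcond 0 0 k
    have c01 := hcond 0 1 k
    have c10 := hcond 1 0 k
    have c11 := hcond 1 1 k
    linear_combination (x 0 * y 0) * c00 + (x 0 * y 1) * c01 + (x 1 * y 0) * c10 + (x 1 * y 1) * c11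

/-! ### Assembly -/

lemma master (B B' : BL2) :
    isoRelL B B' ↔ Rf ((E1.trans E2) B) ((E1.trans E2) B') := by
  rw [isoRelL_iff_Rc]
  have h1 : toC B = dC (eC (toC B)) := (dC_eC _).symm
  have h2 : toC B' = dC (eC (toC B')) := (dC_eC _).symm
  rw [h1, h2, Rc_iff]
  rfl

lemma masterInv (m n : Fin 256) :
    Rf m n ↔ isoRelL ((E1.trans E2).symm m) ((E1.trans E2).symm n) := by
  rw [master ((E1.trans E2).symm m) ((E1.trans E2).symm n),
    Equiv.apply_symm_apply, Equiv.apply_symm_apply]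

lemma isoRelL_equiv : Equivalence (isoRelL (K := ZMod 2) (n := 2)) := by
  constructor
  · intro B; exact ⟨LinearEquiv.refl _ _, fun x y => rfl⟩
  · rintro B B' ⟨f, hf⟩
    refine ⟨f.symm, fun x y => f.injective ?_⟩
    rw [f.apply_symm_apply, hf, f.apply_symm_apply, f.apply_symm_apply]
  · rintro B B' B'' ⟨f, hf⟩ ⟨g, hg⟩
    exact ⟨f.trans g, fun x y => by
      simp only [LinearEquiv.trans_apply, hf, hg]⟩

lemma Rf_equiv : Equivalence Rf := by
  constructor
  · intro m; exact (masterInv m m).mpr (isoRelL_equiv.refl _)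
  · intro m n h; exact (masterInv n m).mpr (isoRelL_equiv.symm ((masterInv m n).mp h))
  · intro a b c h1 h2
    exact (masterInv a c).mpr (isoRelL_equiv.trans ((masterInv a b).mp h1) ((masterInv b c).mp h2))

def Rfs : Setoid (Fin 256) := ⟨Rf, Rf_equiv⟩

set_option maxRecDepth 1000000 in
set_option maxHeartbeats 16000000 in
/-- There are exactly 52 isomorphism classes of 2-dimensional algebras over `F₂`. -/
theorem card_isoClasses_f2_dim2 :
    Nat.card (Quot (isoRelL (K := ZMod 2) (n := 2))) = 52 := by
  have e : Quot (isoRelL (K := ZMod 2) (n := 2)) ≃ Quot Rf :=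
    Quot.congr (E1.trans E2) master
  rw [Nat.card_congr e]
  have : Nat.card (Quot Rf) = Nat.card (Quotient Rfs) := rfl
  rw [this]
  letI : Fintype (Quotient Rfs) :=
    @Quotient.fintype _ _ Rfs (fun a b => inferInstanceAs (Decidable (Rf a b)))
  rw [Nat.card_eq_fintype_card]
  decide
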